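/- Let n ≥ 1, K ∈ ℕ, and 0 < τ̌ ≤ τ̂ be reals. Let (t^i_k)_{k∈ℕ} be a sequence of reals with t^i_0 = 0 and τ̌ ≤ t^i_{k+1} − t^i_k ≤ τ̂ for all k, and for each k ∈ ℕ let N(i,k) ⊆ {1,…,n}\{i} and, for each j ∈ N(i,k), let τ^k_{ij} ∈ [0, Kτ̌]. Then for every k ∈ ℕ, the set of real numbers ({t^i_{k'} : k' ∈ ℕ} ∪ {t^i_{k'} − τ^{k'}_{ij} : k' ∈ ℕ, j ∈ N(i,k')}) ∩ [t^i_k, t^i_{k+1}) has at most K(n − 1) + 1 elements. -/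
import Mathlib


/-- For a single agent `i` with update times `t_k` and delayed times `t_{k'} - τ^{k'}_{ij}`,
any interval `[t_k, t_{k+1})` contains at most `K(n - 1) + 1` of these times. -/
theorem delayed_times_single_agent_bound
    (n : ℕ) (hn : 1 ≤ n) (K : ℕ)
    (τlo τhi : ℝ) (hτlo : 0 < τlo) (hττ : τlo ≤ τhi)
    (i : Fin n)
    (t : ℕ → ℝ) (ht0 : t 0 = 0)
    (hstep : ∀ k, τlo ≤ t (k + 1) - t k ∧ t (k + 1) - t k ≤ τhi)
    (N : ℕ → Finset (Fin n)) (hNself : ∀ k, i ∉ N k)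
    (τd : ℕ → Fin n → ℝ)
    (hdelay : ∀ k, ∀ j ∈ N k, τd k j ∈ Set.Icc (0 : ℝ) ((K : ℝ) * τlo))
    (k : ℕ) :
    ({s : ℝ | ((∃ k', t k' = s) ∨ ∃ k', ∃ j ∈ N k', t k' - τd k' j = s) ∧
        s ∈ Set.Ico (t k) (t (k + 1))}).Finite ∧
    ({s : ℝ | ((∃ k', t k' = s) ∨ ∃ k', ∃ j ∈ N k', t k' - τd k' j = s) ∧
        s ∈ Set.Ico (t k) (t (k + 1))}).ncard ≤ K * (n - 1) + 1 := by
  have hmono : StrictMono t := strictMono_nat_of_lt_succ fun m => by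
    have := (hstep m).1; linarith
  have hgap : ∀ a m : ℕ, t a + (m : ℝ) * τlo ≤ t (a + m) := by
    intro a m
    induction m with
    | zero => simp
    | succ m ih =>
      have h1 := (hstep (a + m)).1
      have : a + (m + 1) = (a + m) + 1 := by omega
      rw [this]
      push_cast
      linarith
  set F : Finset ℝ := insert (t k)
    ((Finset.Icc (k + 1) (k + K)).biUnion fun k' =>
      (N k').image fun j => t k' - τd k' j) with hF
  have hsub : {s : ℝ | ((∃ k', t k' = s) ∨ ∃ k', ∃ j ∈ N k', t k' - τd k' j = s) ∧
      s ∈ Set.Ico (t k) (t (k + 1))} ⊆ ↑F := by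
    rintro s ⟨h1, hlo, hhi⟩
    rcases h1 with ⟨k', rfl⟩ | ⟨k', j, hj, rfl⟩
    · have hk1 : k ≤ k' := by
        by_contra h; push_neg at h
        exact absurd hlo (not_le.2 (hmono h))
      have hk2 : k' < k + 1 := hmono.lt_iff_lt.mp hhi
      have : k' = k := by omega
      subst this
      exact Finset.mem_coe.mpr (Finset.mem_insert_self _ _)
    · obtain ⟨hd0, hdK⟩ := hdelay k' j hj
      have hk1 : k ≤ k' := by
        by_contra h; push_neg at h
        have := hmono h
        linarith
      have hk2 : k' ≤ k + K := by
        by_contra h; push_neg at h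
        have h2 : t (k + 1 + K) ≤ t k' := hmono.monotone (by omega)
        have h3 := hgap (k + 1) K
        linarith
      rcases eq_or_lt_of_le hk1 with rfl | hk1'
      · have hz : τd k j = 0 := by linarith
        rw [hz, sub_zero]
        exact Finset.mem_coe.mpr (Finset.mem_insert_self _ _)
      · refine Finset.mem_coe.mpr (Finset.mem_insert_of_mem ?_)
        refine Finset.mem_biUnion.mpr ⟨k', Finset.mem_Icc.mpr ⟨hk1', hk2⟩, ?_⟩
        exact Finset.mem_image.mpr ⟨j, hj, rfl⟩
  have hfin : ({s : ℝ | ((∃ k', t k' = s) ∨ ∃ k', ∃ j ∈ N k', t k' - τd k' j = s) ∧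
      s ∈ Set.Ico (t k) (t (k + 1))}).Finite := Set.Finite.subset F.finite_toSet hsub
  refine ⟨hfin, ?_⟩
  have hcard1 : ({s : ℝ | ((∃ k', t k' = s) ∨ ∃ k', ∃ j ∈ N k', t k' - τd k' j = s) ∧
      s ∈ Set.Ico (t k) (t (k + 1))}).ncard ≤ F.card := by
    calc _ ≤ (↑F : Set ℝ).ncard := Set.ncard_le_ncard hsub F.finite_toSet
      _ = F.card := Set.ncard_coe_finset F
  have hNcard : ∀ k', (N k').card ≤ n - 1 := by
    intro k'
    have hsub2 : N k' ⊆ Finset.univ.erase i := fun j hj =>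
      Finset.mem_erase.mpr ⟨fun h => hNself k' (h ▸ hj), Finset.mem_univ j⟩
    calc (N k').card ≤ (Finset.univ.erase i).card := Finset.card_le_card hsub2
      _ = n - 1 := by
        rw [Finset.card_erase_of_mem (Finset.mem_univ i)]
        simp
  have hcard2 : F.card ≤ K * (n - 1) + 1 := by
    calc F.card ≤ ((Finset.Icc (k + 1) (k + K)).biUnion fun k' =>
          (N k').image fun j => t k' - τd k' j).card + 1 := Finset.card_insert_le _ _
      _ ≤ (∑ k' ∈ Finset.Icc (k + 1) (k + K),
            ((N k').image fun j => t k' - τd k' j).card) + 1 := by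
          exact Nat.add_le_add_right (Finset.card_biUnion_le) 1
      _ ≤ (∑ _k' ∈ Finset.Icc (k + 1) (k + K), (n - 1)) + 1 := by
          refine Nat.add_le_add_right (Finset.sum_le_sum fun k' _ => ?_) 1
          exact le_trans (Finset.card_image_le) (hNcard k')
      _ = K * (n - 1) + 1 := by
          rw [Finset.sum_const, Nat.card_Icc]
          simp [Nat.mul_comm]
  omega
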